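/- arXiv:math/9906178 — 5 statements merged into one kernel-verified Lean document; each statement's English description precedes it below -/
import Mathlib

section
/- Let K be a locally compact subset of ℝⁿ and f : K → ℝⁿ a continuous map. The following are equivalent: (i) for every x ∈ K, f(x) ∈ T_K(x); (ii) for every x ∈ K, f(x) belongs to the closed convex hull of T_K(x); (iii) for every x ∈ K and every p ∈ N_K(x), ⟨p, f(x)⟩ ≤ 0. -/
open Filter Set Metric Topology
open scoped ENNReal NNReal

noncomputable section

/-- The contingent (Bouligand) cone to `S` at `x`:
`T_S(x) = {v : liminf_{h→0+} dist(x + h·v, S)/h = 0}`. -/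
def contCone {E : Type*} [NormedAddCommGroup E] [NormedSpace ℝ E] (S : Set E) (x : E) : Set E :=
  {v | Filter.liminf (fun h : ℝ => ENNReal.ofReal (Metric.infDist (x + h • v) S / h))
      (nhdsWithin (0:ℝ) (Set.Ioi 0)) = 0}

/-- The normal cone to `S` at `x`: the polar cone of the contingent cone. -/
def normCone {E : Type*} [NormedAddCommGroup E] [InnerProductSpace ℝ E] (S : Set E) (x : E) :
    Set E :=
  {p | ∀ v ∈ contCone S x, (inner ℝ p v : ℝ) ≤ 0}

section Helpers

variable {E : Type*} [NormedAddCommGroup E] [InnerProductSpace ℝ E]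

set_option maxHeartbeats 1000000 in
lemma mem_contCone_of_eventually {S : Set E} {x v : E}
    (h : ∀ ε : ℝ, 0 < ε → ∀ᶠ t in 𝓝[>] (0:ℝ), infDist (x + t • v) S ≤ ε * t) :
    v ∈ contCone S x := by
  refine le_antisymm ?_ zero_le
  refine ENNReal.le_of_forall_pos_le_add fun ε hε _ => ?_
  rw [zero_add]
  have key : Filter.liminf (fun t : ℝ => ENNReal.ofReal (infDist (x + t • v) S / t))
      (𝓝[>] (0:ℝ)) ≤ ENNReal.ofReal (ε : ℝ) := by
    refine liminf_le_of_frequently_le ?_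
    refine (((h ε (by exact_mod_cast hε)).and self_mem_nhdsWithin).mono ?_).frequently
    rintro t ⟨ht1, ht2⟩
    refine ENNReal.ofReal_le_ofReal ?_
    rw [div_le_iff₀ ht2]
    exact ht1
  simpa [ENNReal.ofReal_coe_nnreal] using key

set_option maxHeartbeats 1000000 in
lemma exists_small_of_mem_contCone {S : Set E} {x v : E} (hv : v ∈ contCone S x)
    {ε : ℝ} (hε : 0 < ε) :
    ∃ t : ℝ, 0 < t ∧ t ≤ ε ∧ infDist (x + t • v) S < ε * t := by
  have h0 : Filter.liminf (fun h : ℝ => ENNReal.ofReal (infDist (x + h • v) S / h))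
      (𝓝[>] (0:ℝ)) < ENNReal.ofReal ε := by
    rw [hv]; exact ENNReal.ofReal_pos.2 hε
  have hfreq := frequently_lt_of_liminf_lt (by isBoundedDefault) h0
  have hIoc : Ioc (0:ℝ) ε ∈ 𝓝[>] (0:ℝ) := Ioc_mem_nhdsGT_of_mem ⟨le_rfl, hε⟩
  obtain ⟨t, ht1, ht2⟩ := (hfreq.and_eventually (eventually_of_mem hIoc fun z hz => hz)).exists
  refine ⟨t, ht2.1, ht2.2, ?_⟩
  have := (ENNReal.ofReal_lt_ofReal_iff hε).1 ht1
  rwa [div_lt_iff₀ ht2.1] at this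

set_option maxHeartbeats 2000000 in
/-- A proximal normal vector lies in the (contingent) normal cone. -/
lemma inner_le_zero_of_nearest {S : Set E} {y z : E} (hz : z ∈ S)
    (hnear : ∀ w ∈ S, dist y z ≤ dist y w) {v : E} (hv : v ∈ contCone S z) :
    (inner ℝ (y - z) v : ℝ) ≤ 0 := by
  by_contra hpos
  push_neg at hpos
  set a : ℝ := ‖y - z‖ with ha
  set c : ℝ := (inner ℝ (y - z) v : ℝ) with hc
  set D : ℝ := ‖v‖ ^ 2 / 2 + a + ‖v‖ + 1 with hD
  have hDpos : 0 < D := by positivity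
  set δ : ℝ := min 1 (c / D) with hδdef
  have hδpos : 0 < δ := lt_min one_pos (div_pos hpos hDpos)
  have hδ1 : δ ≤ 1 := min_le_left _ _
  have hδD : δ * D ≤ c := by
    have h := min_le_right 1 (c / D)
    have h2 := mul_le_mul_of_nonneg_right h hDpos.le
    rwa [div_mul_cancel₀ _ (ne_of_gt hDpos), ← hδdef] at h2
  obtain ⟨t, ht0, htδ, hdist⟩ := exists_small_of_mem_contCone hv hδpos
  obtain ⟨w, hwS, hw⟩ := (infDist_lt_iff ⟨z, hz⟩).1 hdist
  have h1 : a ≤ dist y w := by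
    have := hnear w hwS
    rwa [dist_eq_norm] at this
  have h2 : dist y w ≤ ‖y - z - t • v‖ + δ * t := by
    have : y - w = (y - z - t • v) + ((z + t • v) - w) := by abel
    rw [dist_eq_norm, this]
    refine (norm_add_le _ _).trans ?_
    have : ‖(z + t • v) - w‖ < δ * t := by rwa [← dist_eq_norm]
    linarith
  have h3 : ‖y - z - t • v‖ ^ 2 = a ^ 2 - 2 * (t * c) + t ^ 2 * ‖v‖ ^ 2 := by
    rw [norm_sub_sq_real, real_inner_smul_right, norm_smul, Real.norm_eq_abs,
      abs_of_pos ht0, mul_pow, ← hc, ← ha]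
  have h4 : ‖y - z - t • v‖ ≤ a + t * ‖v‖ := by
    calc ‖y - z - t • v‖ ≤ ‖y - z‖ + ‖t • v‖ := norm_sub_le _ _
    _ = a + t * ‖v‖ := by
        rw [norm_smul, Real.norm_eq_abs, abs_of_pos ht0, ha]
  have hb0 : (0:ℝ) ≤ ‖y - z - t • v‖ := norm_nonneg _
  have ha0 : (0:ℝ) ≤ a := norm_nonneg _
  have hv0 : (0:ℝ) ≤ ‖v‖ := norm_nonneg _
  -- derive contradiction
  have htop : a ≤ ‖y - z - t • v‖ + δ * t := le_trans h1 h2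
  have hsq : a ^ 2 ≤ (‖y - z - t • v‖ + δ * t) ^ 2 := by
    nlinarith [htop, ha0, hb0, mul_pos ht0 hδpos]
  have h5 : 2 * t * c ≤ t ^ 2 * ‖v‖ ^ 2 + 2 * ‖y - z - t • v‖ * (δ * t) + (δ * t) ^ 2 := by
    nlinarith [hsq, h3]
  have h5' : t * (2 * c) ≤ t * (t * ‖v‖ ^ 2 + 2 * ‖y - z - t • v‖ * δ + δ ^ 2 * t) := by
    nlinarith [h5]
  have h6 : 2 * c ≤ t * ‖v‖ ^ 2 + 2 * ‖y - z - t • v‖ * δ + δ ^ 2 * t :=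
    le_of_mul_le_mul_left h5' ht0
  have h8 : t ≤ 1 := htδ.trans hδ1
  have h7 : ‖y - z - t • v‖ ≤ a + ‖v‖ := by
    have := mul_le_mul_of_nonneg_right h8 hv0
    linarith [h4]
  have h9 : t * ‖v‖ ^ 2 ≤ δ * ‖v‖ ^ 2 := mul_le_mul_of_nonneg_right htδ (sq_nonneg _)
  have h10 : 2 * ‖y - z - t • v‖ * δ ≤ 2 * (a + ‖v‖) * δ := by nlinarith [h7, hδpos.le]
  have h11a : δ ^ 2 * t ≤ δ ^ 2 := by nlinarith [sq_nonneg δ]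
  have h11b : δ ^ 2 ≤ δ := by nlinarith [hδpos, hδ1]
  have hδD' : δ * (‖v‖ ^ 2 / 2 + a + ‖v‖ + 1) ≤ c := by rw [← hD]; exact hδD
  nlinarith [h6, h9, h10, h11a, h11b, hδD', hδpos]

/-- Existence of a nearest point in a locally compact set. -/
lemma exists_nearest {S : Set E} {x₀ : E} (hx₀ : x₀ ∈ S) {r : ℝ} (hr : 0 < r)
    (hcomp : IsCompact (S ∩ closedBall x₀ r)) {y : E} (hy : dist y x₀ ≤ r / 4) :
    ∃ z ∈ S, (∀ w ∈ S, dist y z ≤ dist y w) ∧ dist y z = infDist y S ∧ dist z x₀ ≤ r / 2 := by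
  have hx₀C : x₀ ∈ S ∩ closedBall x₀ r := ⟨hx₀, mem_closedBall_self hr.le⟩
  obtain ⟨z, hzC, hz⟩ := hcomp.exists_infDist_eq_dist ⟨x₀, hx₀C⟩ y
  have hyz : dist y z ≤ r / 4 := by
    rw [← hz]; exact (infDist_le_dist_of_mem hx₀C).trans hy
  have hnear : ∀ w ∈ S, dist y z ≤ dist y w := by
    intro w hw
    by_cases hwB : w ∈ closedBall x₀ r
    · rw [← hz]; exact infDist_le_dist_of_mem ⟨hw, hwB⟩
    · have hwx : r < dist w x₀ := by
        simpa [mem_closedBall, not_le] using hwB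
      have : dist w x₀ ≤ dist w y + dist y x₀ := dist_triangle _ _ _
      have : dist w y ≥ r - r / 4 := by linarith
      rw [dist_comm w y] at this
      linarith
  have heq : dist y z = infDist y S := by
    refine le_antisymm ?_ (infDist_le_dist_of_mem hzC.1)
    by_contra hlt
    push_neg at hlt
    obtain ⟨w, hwS, hw⟩ := (infDist_lt_iff ⟨z, hzC.1⟩).1 hlt
    exact absurd (hnear w hwS) (not_le.2 hw)
  have hzx : dist z x₀ ≤ r / 2 := by
    have := dist_triangle z y x₀
    rw [dist_comm z y] at this
    linarith
  exact ⟨z, hzC.1, hnear, heq, hzx⟩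

end Helpers

set_option maxHeartbeats 1000000 in
/-- Main implication (iii) ⇒ (i). -/
lemma mem_contCone_of_normCone {n : ℕ} (K : Set (EuclideanSpace ℝ (Fin n)))
    (f : EuclideanSpace ℝ (Fin n) → EuclideanSpace ℝ (Fin n))
    (hK : ∀ x ∈ K, ∃ r > (0:ℝ), IsCompact (K ∩ Metric.closedBall x r))
    (hf : ContinuousOn f K)
    (h3 : ∀ x ∈ K, ∀ p ∈ normCone K x, (inner ℝ p (f x) : ℝ) ≤ 0) :
    ∀ x ∈ K, f x ∈ contCone K x := by
  intro x₀ hx₀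
  apply mem_contCone_of_eventually
  intro ε hε
  obtain ⟨r, hr, hcomp⟩ := hK x₀ hx₀
  obtain ⟨δ, hδ, hfδ⟩ := Metric.continuousWithinAt_iff.1 (hf x₀ hx₀) (ε / 2) (half_pos hε)
  set M : ℝ := ‖f x₀‖ with hMdef
  have hM : 0 ≤ M := norm_nonneg _
  set T : ℝ := min (r / 4) (δ / 4) / (M + 1) with hTdef
  have hT0 : 0 < T := div_pos (lt_min (by linarith) (by linarith)) (by linarith)
  have hTM : T * (M + 1) = min (r / 4) (δ / 4) := by
    rw [hTdef, div_mul_cancel₀]; linarith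
  set g : ℝ → ℝ := fun t => infDist (x₀ + t • f x₀) K with hgdef
  have hgc : Continuous g :=
    (continuous_infDist_pt K).comp (continuous_const.add (continuous_id.smul continuous_const))
  have hg0 : g 0 = 0 := by
    simp only [hgdef, zero_smul, add_zero]
    exact infDist_zero_of_mem hx₀
  have hglip : ∀ s t : ℝ, g s ≤ g t + |s - t| * M := by
    intro s t
    have := infDist_le_infDist_add_dist (x := x₀ + s • f x₀) (y := x₀ + t • f x₀) (s := K)
    refine this.trans ?_
    have hd : dist (x₀ + s • f x₀) (x₀ + t • f x₀) = |s - t| * M := by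
      rw [dist_eq_norm]
      have : (x₀ + s • f x₀) - (x₀ + t • f x₀) = (s - t) • f x₀ := by
        rw [sub_smul]; abel
      rw [this, norm_smul, Real.norm_eq_abs, hMdef]
    rw [hd]
  -- key estimate at points of positive distance
  have key : ∀ t ∈ Icc (0:ℝ) T, 0 < g t → ∀ s : ℝ, 0 < s →
      g (t + s) ≤ g t + s * (ε / 2) + s ^ 2 * M ^ 2 / (2 * g t) := by
    intro t ht hgt s hs
    set y := x₀ + t • f x₀ with hy
    have hdyx : dist y x₀ = t * M := by
      rw [hy, dist_eq_norm, add_sub_cancel_left, norm_smul, Real.norm_eq_abs,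
        abs_of_nonneg ht.1]
    have htM : t * M ≤ min (r / 4) (δ / 4) := by
      calc t * M ≤ T * M := mul_le_mul_of_nonneg_right ht.2 hM
      _ ≤ T * (M + 1) := by nlinarith [hT0]
      _ = _ := hTM
    have hyx : dist y x₀ ≤ r / 4 := by
      rw [hdyx]; exact htM.trans (min_le_left _ _)
    obtain ⟨z, hzK, hnear, heq, hzx⟩ := exists_nearest hx₀ hr hcomp hyx
    have hgta : g t = dist y z := heq.symm
    -- z is close to x₀
    have hzclose : dist z x₀ < δ := by
      have h1 : dist y z ≤ dist y x₀ := heq ▸ infDist_le_dist_of_mem hx₀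
      have h2 : dist z x₀ ≤ dist z y + dist y x₀ := dist_triangle _ _ _
      rw [dist_comm z y] at h2
      have : dist z x₀ ≤ 2 * (t * M) := by rw [hdyx] at h1 h2; linarith
      have hδ4 : t * M ≤ δ / 4 := htM.trans (min_le_right _ _)
      linarith
    have hfz : dist (f z) (f x₀) < ε / 2 := hfδ hzK hzclose
    set p := y - z with hp
    have hpa : ‖p‖ = g t := by rw [hp, ← dist_eq_norm, ← hgta]
    have hpN : p ∈ normCone K z := fun v hv => inner_le_zero_of_nearest hzK hnear hv
    have hpfz : (inner ℝ p (f z) : ℝ) ≤ 0 := h3 z hzK p hpN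
    have hinner : (inner ℝ p (f x₀) : ℝ) ≤ g t * (ε / 2) := by
      have hsplit : (inner ℝ p (f x₀) : ℝ) =
          (inner ℝ p (f z) : ℝ) + (inner ℝ p (f x₀ - f z) : ℝ) := by
        rw [inner_sub_right]; ring
      have hcs : (inner ℝ p (f x₀ - f z) : ℝ) ≤ ‖p‖ * ‖f x₀ - f z‖ :=
        real_inner_le_norm _ _
      have hnfz : ‖f x₀ - f z‖ ≤ ε / 2 := by
        rw [← dist_eq_norm, dist_comm]
        exact hfz.le
      have : ‖p‖ * ‖f x₀ - f z‖ ≤ g t * (ε / 2) := by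
        rw [hpa]
        exact mul_le_mul_of_nonneg_left hnfz (hgta ▸ dist_nonneg)
      linarith
    -- now estimate g (t+s)
    have hest : g (t + s) ≤ ‖p + s • f x₀‖ := by
      have hpt : x₀ + (t + s) • f x₀ - z = p + s • f x₀ := by
        rw [hp, hy, add_smul]; abel
      calc g (t + s) ≤ dist (x₀ + (t + s) • f x₀) z := infDist_le_dist_of_mem hzK
      _ = ‖p + s • f x₀‖ := by rw [dist_eq_norm, hpt]
    have hsq : ‖p + s • f x₀‖ ^ 2 = g t ^ 2 + 2 * (s * (inner ℝ p (f x₀) : ℝ)) + s ^ 2 * M ^ 2 := by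
      rw [norm_add_sq_real, real_inner_smul_right, norm_smul, Real.norm_eq_abs,
        abs_of_pos hs, mul_pow, hpa, hMdef]
    set R : ℝ := g t + s * (ε / 2) + s ^ 2 * M ^ 2 / (2 * g t) with hR
    have hR0 : 0 ≤ R := by positivity
    have hsqle : ‖p + s • f x₀‖ ^ 2 ≤ R ^ 2 := by
      rw [hsq, hR]
      have h2gt : (0:ℝ) < 2 * g t := by linarith
      set q : ℝ := s ^ 2 * M ^ 2 / (2 * g t) with hqdef
      have hq : q * (2 * g t) = s ^ 2 * M ^ 2 := by
        rw [hqdef]; field_simp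
      have hmul : s * (inner ℝ p (f x₀) : ℝ) ≤ s * (g t * (ε / 2)) :=
        mul_le_mul_of_nonneg_left hinner hs.le
      nlinarith [sq_nonneg (s * (ε / 2) + q), hq, hmul]
    calc g (t + s) ≤ ‖p + s • f x₀‖ := hest
    _ = Real.sqrt (‖p + s • f x₀‖ ^ 2) := (Real.sqrt_sq (norm_nonneg _)).symm
    _ ≤ Real.sqrt (R ^ 2) := Real.sqrt_le_sqrt hsqle
    _ = R := Real.sqrt_sq hR0
  -- fencing argument
  have fence : ∀ c : ℝ, 0 < c → ∀ t ∈ Icc (0:ℝ) T, g t ≤ ε * t + c := by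
    intro c hc
    set B : ℝ → ℝ := fun t => ε * t + c with hB
    set f' : ℝ → ℝ := fun t => if g t = B t then ε / 2 else M + 1 with hf'def
    have hB' : ∀ t ∈ Ico (0:ℝ) T, HasDerivWithinAt B ε (Ici t) t := by
      intro t _
      have : HasDerivAt B ε t := by
        exact (((hasDerivAt_id t).const_mul ε).add_const c).congr_deriv (mul_one ε)
      exact this.hasDerivWithinAt
    have hslope : ∀ t ∈ Ico (0:ℝ) T, ∀ ρ, f' t < ρ → ∃ᶠ z in 𝓝[>] t, slope g t z < ρ := by
      intro t ht ρ hρ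
      by_cases hcontact : g t = B t
      · -- contact point
        have hρ2 : ε / 2 < ρ := by simpa [hf'def, hcontact] using hρ
        have ha : 0 < g t := by
          rw [hcontact]
          show 0 < ε * t + c
          nlinarith [mul_nonneg hε.le ht.1]
        set s₀ : ℝ := (ρ - ε / 2) * (2 * g t) / (M ^ 2 + 1) with hs₀
        have hs₀pos : 0 < s₀ := by
          apply div_pos _ (by positivity)
          have : 0 < ρ - ε / 2 := by linarith [hρ2]
          positivity
        refine (Filter.eventually_of_mem
          (Ioo_mem_nhdsGT_of_mem ⟨le_rfl, lt_add_of_pos_right t hs₀pos⟩) ?_).frequently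
        intro w hw
        rw [Set.mem_Ioo] at hw
        have hs : 0 < w - t := sub_pos.2 hw.1
        have hss₀ : w - t < s₀ := by linarith [hw.2]
        have hkey := key t ⟨ht.1, ht.2.le⟩ ha (w - t) hs
        have hwt : t + (w - t) = w := by ring
        rw [hwt] at hkey
        rw [slope_def_field, div_lt_iff₀ hs]
        have hmul : (w - t) * (M ^ 2 + 1) < (ρ - ε / 2) * (2 * g t) := by
          rw [hs₀, lt_div_iff₀ (show (0:ℝ) < M ^ 2 + 1 by positivity)] at hss₀
          exact hss₀
        have hterm : (w - t) ^ 2 * M ^ 2 / (2 * g t) < (w - t) * (ρ - ε / 2) := by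
          rw [div_lt_iff₀ (by linarith)]
          nlinarith [mul_lt_mul_of_pos_left hmul hs, mul_pos hs hs]
        nlinarith [hkey, hterm]
      · -- non-contact point: use Lipschitz bound
        have hρ2 : M + 1 < ρ := by simpa [hf'def, hcontact] using hρ
        refine (Filter.eventually_of_mem
          (Ioo_mem_nhdsGT_of_mem ⟨le_rfl, lt_add_of_pos_right t one_pos⟩) ?_).frequently
        intro w hw
        rw [Set.mem_Ioo] at hw
        have hs : 0 < w - t := by linarith [hw.1]
        rw [slope_def_field, div_lt_iff₀ hs]
        have hL := hglip w t
        rw [abs_of_pos hs] at hL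
        have := mul_lt_mul_of_pos_left hρ2 hs
        nlinarith [hL, this]
    have hbound : ∀ t ∈ Ico (0:ℝ) T, g t = B t → f' t < ε := by
      intro t _ hcontact
      rw [hf'def]
      simp only [if_pos hcontact]
      linarith
    have := image_le_of_liminf_slope_right_lt_deriv_boundary' (f := g) (f' := f')
      hgc.continuousOn hslope (by rw [hg0]; show (0:ℝ) ≤ ε * 0 + c; linarith)
      ((continuous_const.mul continuous_id).add continuous_const).continuousOn hB' hbound
    intro t ht
    exact this ht
  -- conclude: g t ≤ ε t on (0, T]
  filter_upwards [Ioc_mem_nhdsGT_of_mem (Set.mem_Ico.2 ⟨le_rfl, hT0⟩)] with t ht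
  have htI : t ∈ Icc (0:ℝ) T := ⟨ht.1.le, ht.2⟩
  have hle : g t ≤ ε * t := by
    by_contra hgt
    push_neg at hgt
    have := fence ((g t - ε * t) / 2) (by linarith) t htI
    linarith
  exact hle

/-- Let `K ⊆ ℝⁿ` be locally compact and `f : K → ℝⁿ` continuous. The following are
equivalent: (i) `f(x) ∈ T_K(x)` on `K`; (ii) `f(x)` lies in the closed convex hull of
`T_K(x)` on `K`; (iii) `⟨p, f(x)⟩ ≤ 0` for all `x ∈ K`, `p ∈ N_K(x)`. -/
theorem viability_domain_equivalences {n : ℕ} (K : Set (EuclideanSpace ℝ (Fin n)))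
    (f : EuclideanSpace ℝ (Fin n) → EuclideanSpace ℝ (Fin n))
    (hK : ∀ x ∈ K, ∃ r > (0:ℝ), IsCompact (K ∩ Metric.closedBall x r))
    (hf : ContinuousOn f K) :
    ((∀ x ∈ K, f x ∈ contCone K x) ↔
      (∀ x ∈ K, f x ∈ closure (convexHull ℝ (contCone K x)))) ∧
    ((∀ x ∈ K, f x ∈ contCone K x) ↔
      (∀ x ∈ K, ∀ p ∈ normCone K x, (inner ℝ p (f x) : ℝ) ≤ 0)) := by
  have h12 : (∀ x ∈ K, f x ∈ contCone K x) →
      (∀ x ∈ K, f x ∈ closure (convexHull ℝ (contCone K x))) :=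
    fun h x hx => subset_closure (subset_convexHull ℝ _ (h x hx))
  have h23 : (∀ x ∈ K, f x ∈ closure (convexHull ℝ (contCone K x))) →
      (∀ x ∈ K, ∀ p ∈ normCone K x, (inner ℝ p (f x) : ℝ) ≤ 0) := by
    intro h2 x hx p hp
    set S : Set (EuclideanSpace ℝ (Fin n)) := {v | (inner ℝ p v : ℝ) ≤ 0} with hS
    have hlin : IsLinearMap ℝ (fun v : EuclideanSpace ℝ (Fin n) => (inner ℝ p v : ℝ)) :=
      ⟨fun a b => inner_add_right _ _ _, fun c v => real_inner_smul_right _ _ _⟩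
    have hcv : Convex ℝ S := convex_halfSpace_le hlin 0
    have hcl : IsClosed S :=
      isClosed_le (Continuous.inner continuous_const continuous_id) continuous_const
    have hsub : contCone K x ⊆ S := fun v hv => hp v hv
    have : closure (convexHull ℝ (contCone K x)) ⊆ S := by
      rw [← hcl.closure_eq]
      exact closure_mono (convexHull_min hsub hcv)
    exact this (h2 x hx)
  have h31 : (∀ x ∈ K, ∀ p ∈ normCone K x, (inner ℝ p (f x) : ℝ) ≤ 0) →
      (∀ x ∈ K, f x ∈ contCone K x) :=
    mem_contCone_of_normCone K f hK hf
  exact ⟨⟨h12, fun h => h31 (h23 h)⟩, ⟨fun h => h23 (h12 h), h31⟩⟩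
end
end

section
/- Let f : ℝⁿ → ℝⁿ be continuous and monotone with constant μ ∈ ℝ. Then any two solutions x₁(·), x₂(·) of x' = f(x) on [0,∞) satisfy ‖x₁(t) − x₂(t)‖ ≤ e^{−μ t}·‖x₁(0) − x₂(0)‖ for all t ≥ 0; in particular, the solution of x' = f(x) starting from any given initial state is unique. -/
open Filter Set Metric Topology
open scoped ENNReal NNReal

noncomputable section

/-- `x` is a solution of `x' = f(x)` on the interval `I`. -/
def SolOn {E : Type*} [NormedAddCommGroup E] [NormedSpace ℝ E]
    (f : E → E) (x : ℝ → E) (I : Set ℝ) : Prop :=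
  ∀ t ∈ I, HasDerivWithinAt x (f (x t)) I t

/-- Let `f : ℝⁿ → ℝⁿ` be continuous and monotone with constant `μ`, i.e.
`⟨f(x₁) − f(x₂), x₁ − x₂⟩ ≤ −μ‖x₁ − x₂‖²`. Then any two solutions of `x' = f(x)` on
`[0,∞)` satisfy `‖x₁(t) − x₂(t)‖ ≤ e^{−μt}·‖x₁(0) − x₂(0)‖` for all `t ≥ 0`; in
particular, solutions with the same initial state coincide. -/
theorem monotone_contraction_and_uniqueness {n : ℕ}
    (f : EuclideanSpace ℝ (Fin n) → EuclideanSpace ℝ (Fin n)) (μ : ℝ)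
    (hf : Continuous f)
    (hmono : ∀ x₁ x₂ : EuclideanSpace ℝ (Fin n),
      (inner ℝ (f x₁ - f x₂) (x₁ - x₂) : ℝ) ≤ -μ * ‖x₁ - x₂‖ ^ 2) :
    (∀ x₁ x₂ : ℝ → EuclideanSpace ℝ (Fin n),
      SolOn f x₁ (Set.Ici 0) → SolOn f x₂ (Set.Ici 0) →
      ∀ t : ℝ, 0 ≤ t → ‖x₁ t - x₂ t‖ ≤ Real.exp (-μ * t) * ‖x₁ 0 - x₂ 0‖) ∧
    (∀ x₁ x₂ : ℝ → EuclideanSpace ℝ (Fin n),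
      SolOn f x₁ (Set.Ici 0) → SolOn f x₂ (Set.Ici 0) → x₁ 0 = x₂ 0 →
      ∀ t : ℝ, 0 ≤ t → x₁ t = x₂ t) := by
  have main : ∀ x₁ x₂ : ℝ → EuclideanSpace ℝ (Fin n),
      SolOn f x₁ (Set.Ici 0) → SolOn f x₂ (Set.Ici 0) →
      ∀ t : ℝ, 0 ≤ t → ‖x₁ t - x₂ t‖ ≤ Real.exp (-μ * t) * ‖x₁ 0 - x₂ 0‖ := by
    intro x₁ x₂ h₁ h₂ t ht
    set u : ℝ → EuclideanSpace ℝ (Fin n) := fun s => x₁ s - x₂ s with hu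
    set u' : ℝ → EuclideanSpace ℝ (Fin n) := fun s => f (x₁ s) - f (x₂ s) with hu'
    have hud : ∀ s ∈ Set.Ici (0:ℝ), HasDerivWithinAt u (u' s) (Set.Ici 0) s :=
      fun s hs => (h₁ s hs).sub (h₂ s hs)
    set g : ℝ → ℝ := fun s => (inner ℝ (u s) (u s) : ℝ) with hg
    set g' : ℝ → ℝ := fun s => 2 * (inner ℝ (u' s) (u s) : ℝ) with hg'
    have hgd : ∀ s ∈ Set.Ici (0:ℝ), HasDerivWithinAt g (g' s) (Set.Ici 0) s := by
      intro s hs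
      have := (hud s hs).inner ℝ (hud s hs)
      convert this using 1
      show (2 : ℝ) * inner ℝ (u' s) (u s) = inner ℝ (u s) (u' s) + inner ℝ (u' s) (u s)
      rw [real_inner_comm (u' s) (u s)]
      ring
      all_goals rfl
    have hucont : ContinuousOn u (Set.Ici 0) := fun s hs =>
      (hud s hs).continuousWithinAt
    have hgcont : ContinuousOn g (Set.Ici 0) := by
      exact hucont.inner hucont
    have key : g t ≤ gronwallBound (g 0) (-2 * μ) 0 (t - 0) := by
      apply le_gronwallBound_of_liminf_deriv_right_le
        (f := g) (f' := g') (a := 0) (b := t)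
        (hgcont.mono Set.Icc_subset_Ici_self)
        (fun s hs r hr => ((hgd s hs.1).mono (Set.Ici_subset_Ici.2 hs.1)).liminf_right_slope_le hr)
        le_rfl _ t (Set.mem_Icc.2 ⟨ht, le_rfl⟩)
      intro s hs
      have h1 : (inner ℝ (u' s) (u s) : ℝ) ≤ -μ * ‖u s‖ ^ 2 := hmono (x₁ s) (x₂ s)
      have h2 : g s = ‖u s‖ ^ 2 := real_inner_self_eq_norm_sq (u s)
      rw [h2, add_zero]
      show (2 : ℝ) * inner ℝ (u' s) (u s) ≤ -2 * μ * ‖u s‖ ^ 2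
      linarith
    have h2t : g t = ‖u t‖ ^ 2 := real_inner_self_eq_norm_sq (u t)
    have h20 : g 0 = ‖u 0‖ ^ 2 := real_inner_self_eq_norm_sq (u 0)
    rw [gronwallBound_ε0, h2t, h20, sub_zero] at key
    have hexp : ‖u 0‖ ^ 2 * Real.exp (-2 * μ * t) = (Real.exp (-μ * t) * ‖u 0‖) ^ 2 := by
      rw [mul_pow, ← Real.exp_nat_mul]
      ring_nf
    rw [hexp] at key
    calc ‖u t‖ = Real.sqrt (‖u t‖ ^ 2) := (Real.sqrt_sq (norm_nonneg _)).symm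
      _ ≤ Real.sqrt ((Real.exp (-μ * t) * ‖u 0‖) ^ 2) := Real.sqrt_le_sqrt key
      _ = Real.exp (-μ * t) * ‖u 0‖ := Real.sqrt_sq (by positivity)
  refine ⟨main, fun x₁ x₂ h₁ h₂ h0 t ht => ?_⟩
  have := main x₁ x₂ h₁ h₂ t ht
  rw [h0, sub_self, norm_zero, mul_zero] at this
  have : x₁ t - x₂ t = 0 := by
    have := le_antisymm this (norm_nonneg _)
    exact norm_eq_zero.1 this
  exact sub_eq_zero.1 this
end
end

section
/- Let f : ℝⁿ → ℝⁿ be continuous with linear growth and C ⊆ ℝⁿ. Then: (i) the viability kernel Viab_f(C) is the largest subset of C viable under f, i.e. Viab_f(C) is itself viable under f and contains every subset of C viable under f; (ii) C \ Viab_f(C) is a repeller under f; (iii) Viab_f(C) \ ∂C is locally backward invariant under f: for every x ∈ Viab_f(C) \ ∂C, every t > 0 and every solution x(·) of x' = f(x) on [0,t] with x(t) = x, there exists s ∈ [0,t) such that x(τ) ∈ Viab_f(C) \ ∂C for all τ ∈ [s,t]. -/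
open Filter Set Metric Topology
open scoped ENNReal NNReal

noncomputable section

/-- `S_f(x₀)`: the set of solutions of `x' = f(x)` on `[0,∞)` starting at `x₀`. -/
def Sols {E : Type*} [NormedAddCommGroup E] [NormedSpace ℝ E] (f : E → E) (x₀ : E) :
    Set (ℝ → E) :=
  {x | x 0 = x₀ ∧ SolOn f x (Set.Ici 0)}

/-- `f` has linear growth. -/
def LinGrowth {E : Type*} [NormedAddCommGroup E] [NormedSpace ℝ E] (f : E → E) : Prop :=
  ∃ c > (0:ℝ), ∀ x, ‖f x‖ ≤ c * (‖x‖ + 1)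

/-- `K` is (globally) viable under `f`. -/
def Viable {E : Type*} [NormedAddCommGroup E] [NormedSpace ℝ E]
    (f : E → E) (K : Set E) : Prop :=
  ∀ x₀ ∈ K, ∃ x ∈ Sols f x₀, ∀ t ∈ Set.Ici (0:ℝ), x t ∈ K

/-- The viability kernel of `K` under `f`. -/
def ViabKer {E : Type*} [NormedAddCommGroup E] [NormedSpace ℝ E]
    (f : E → E) (K : Set E) : Set E :=
  {x₀ ∈ K | ∃ x ∈ Sols f x₀, ∀ t ∈ Set.Ici (0:ℝ), x t ∈ K}

/-- Time-shift of a solution on `[0,∞)` is again a solution on `[0,∞)`. -/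
lemma sol_shift {E : Type*} [NormedAddCommGroup E] [NormedSpace ℝ E]
    (f : E → E) (x : ℝ → E) (hx : SolOn f x (Set.Ici 0)) (t : ℝ) (ht : 0 ≤ t) :
    SolOn f (fun s => x (t + s)) (Set.Ici 0) := by
  intro s hs
  have hs' : (0:ℝ) ≤ s := hs
  have h1 : HasDerivWithinAt (fun u : ℝ => t + u) 1 (Set.Ici 0) s :=
    ((hasDerivAt_id s).const_add t).hasDerivWithinAt
  have h2 := hx (t + s) (by simp only [mem_Ici]; linarith)
  have h3 := h2.scomp s h1 (fun u hu => by
    simp only [mem_Ici] at *; linarith)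
  simpa [Function.comp_def] using h3

/-- Let `f : ℝⁿ → ℝⁿ` be continuous with linear growth and `C ⊆ ℝⁿ`. Then:
(i) the viability kernel `Viab_f(C)` is the largest subset of `C` viable under `f`;
(ii) `C \ Viab_f(C)` is a repeller under `f`;
(iii) `Viab_f(C) \ ∂C` is locally backward invariant under `f`. -/
theorem viability_kernel_properties {n : ℕ}
    (f : EuclideanSpace ℝ (Fin n) → EuclideanSpace ℝ (Fin n))
    (hf : Continuous f) (hgrowth : LinGrowth f)
    (C : Set (EuclideanSpace ℝ (Fin n))) :
    -- (i): the kernel is viable under `f` and contains every subset of `C` viable under `f`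
    (Viable f (ViabKer f C) ∧
      ∀ A : Set (EuclideanSpace ℝ (Fin n)), A ⊆ C → Viable f A → A ⊆ ViabKer f C) ∧
    -- (ii): `C \ Viab_f(C)` is a repeller
    (∀ x₀ ∈ C \ ViabKer f C, ∀ x ∈ Sols f x₀,
      ¬ (∀ t ∈ Set.Ici (0:ℝ), x t ∈ C \ ViabKer f C)) ∧
    -- (iii): `Viab_f(C) \ ∂C` is locally backward invariant
    (∀ x₀ ∈ ViabKer f C \ frontier C, ∀ t : ℝ, 0 < t →
      ∀ x : ℝ → EuclideanSpace ℝ (Fin n), SolOn f x (Set.Icc 0 t) → x t = x₀ →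
        ∃ s ∈ Set.Ico (0:ℝ) t, ∀ τ ∈ Set.Icc s t, x τ ∈ ViabKer f C \ frontier C) := by
  refine ⟨⟨?_, ?_⟩, ?_, ?_⟩
  · -- kernel is viable
    intro x₀ hx₀
    obtain ⟨hx₀C, x, ⟨hx0, hsol⟩, hviab⟩ := hx₀
    refine ⟨x, ⟨hx0, hsol⟩, fun t ht => ?_⟩
    refine ⟨hviab t ht, fun s => x (t + s), ⟨by simp, sol_shift f x hsol t ht⟩, fun s hs => ?_⟩
    exact hviab (t + s) (by simp only [mem_Ici] at *; linarith)
  · -- kernel is the largest viable subset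
    intro A hAC hAviab x₀ hx₀
    obtain ⟨x, hx, hviab⟩ := hAviab x₀ hx₀
    exact ⟨hAC hx₀, x, hx, fun t ht => hAC (hviab t ht)⟩
  · -- repeller
    intro x₀ hx₀ x hx hviab
    exact hx₀.2 ⟨hx₀.1, x, hx, fun t ht => (hviab t ht).1⟩
  · -- local backward invariance
    intro x₀ hx₀ t ht x hsol hxt
    obtain ⟨hker, hfr⟩ := hx₀
    obtain ⟨hx₀C, z, ⟨hz0, hzsol⟩, hzviab⟩ := hker
    have hint : x₀ ∈ interior C := by
      by_contra h
      exact hfr (by rw [← closure_diff_interior]; exact ⟨subset_closure hx₀C, h⟩)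
    have hcont : ContinuousWithinAt x (Set.Icc 0 t) t :=
      (hsol t ⟨ht.le, le_refl t⟩).continuousWithinAt
    have hpre : x ⁻¹' interior C ∈ 𝓝[Set.Icc 0 t] t :=
      hcont (isOpen_interior.mem_nhds (by rw [hxt]; exact hint))
    obtain ⟨ε, hε, hball⟩ := Metric.mem_nhdsWithin_iff.mp hpre
    set s : ℝ := max 0 (t - ε/2) with hs_def
    have hs0 : (0:ℝ) ≤ s := le_max_left _ _
    have hst : s < t := by
      apply max_lt ht
      linarith
    have hmem : ∀ τ ∈ Set.Icc s t, x τ ∈ interior C := by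
      intro τ hτ
      have h1 : τ ∈ Set.Icc (0:ℝ) t := ⟨le_trans hs0 hτ.1, hτ.2⟩
      have h2 : τ ∈ ball t ε := by
        rw [mem_ball, Real.dist_eq, abs_sub_lt_iff]
        have : t - ε/2 ≤ s := le_max_right _ _
        constructor <;> [linarith [hτ.2]; linarith [hτ.1]]
      exact hball ⟨h2, h1⟩
    refine ⟨s, ⟨hs0, hst⟩, fun τ hτ => ?_⟩
    have hxτint : x τ ∈ interior C := hmem τ hτ
    have hτ0 : (0:ℝ) ≤ τ := le_trans hs0 hτ.1
    -- glue the backward piece of x with the viable solution z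
    set σ₀ : ℝ := t - τ with hσ₀def
    have hσ₀ : (0:ℝ) ≤ σ₀ := by rw [hσ₀def]; linarith [hτ.2]
    set y : ℝ → EuclideanSpace ℝ (Fin n) :=
      fun σ => if σ ≤ σ₀ then x (τ + σ) else z (σ - σ₀) with hy_def
    have hA : ∀ σ ∈ Set.Icc (0:ℝ) σ₀, y σ = x (τ + σ) := fun σ hσ => if_pos hσ.2
    have hB : ∀ σ ∈ Set.Ici σ₀, y σ = z (σ - σ₀) := by
      intro σ hσ
      by_cases hle : σ ≤ σ₀
      · have heq : σ = σ₀ := le_antisymm hle hσ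
        have h1 : τ + σ = t := by rw [heq, hσ₀def]; ring
        have h2 : y σ = x (τ + σ) := if_pos hle
        rw [h2, h1, hxt, ← hz0, heq, sub_self]
      · exact if_neg hle
    have hleft : ∀ σ ∈ Set.Icc (0:ℝ) σ₀, HasDerivWithinAt y (f (y σ)) (Set.Icc 0 σ₀) σ := by
      intro σ hσ
      have hmemt : τ + σ ∈ Set.Icc (0:ℝ) t := ⟨by linarith [hσ.1], by
        have h0 := hσ.2; linarith [hσ₀def.le, hσ₀def.ge]⟩
      have hx' := hsol (τ + σ) hmemt
      have h1 : HasDerivWithinAt (fun u : ℝ => τ + u) 1 (Set.Icc 0 σ₀) σ :=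
        ((hasDerivAt_id σ).const_add τ).hasDerivWithinAt
      have h3 := hx'.scomp σ h1 (fun u hu => ⟨by linarith [hu.1], by
        have h0 := hu.2; linarith [hσ₀def.le, hσ₀def.ge]⟩)
      have h4 : HasDerivWithinAt (fun u => x (τ + u)) (f (x (τ + σ))) (Set.Icc 0 σ₀) σ := by
        simpa [Function.comp_def] using h3
      rw [hA σ hσ]
      exact h4.congr hA (hA σ hσ)
    have hright : ∀ σ ∈ Set.Ici σ₀, HasDerivWithinAt y (f (y σ)) (Set.Ici σ₀) σ := by
      intro σ hσ
      have hz' := hzsol (σ - σ₀) (by simp only [mem_Ici] at *; linarith)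
      have h1 : HasDerivWithinAt (fun u : ℝ => u - σ₀) 1 (Set.Ici σ₀) σ :=
        ((hasDerivAt_id σ).sub_const σ₀).hasDerivWithinAt
      have h3 := hz'.scomp σ h1 (fun u hu => by simp only [mem_Ici] at *; linarith)
      have h4 : HasDerivWithinAt (fun u => z (u - σ₀)) (f (z (σ - σ₀))) (Set.Ici σ₀) σ := by
        simpa [Function.comp_def] using h3
      rw [hB σ hσ]
      exact h4.congr hB (hB σ hσ)
    have hysol : SolOn f y (Set.Ici 0) := by
      intro σ hσ
      have hσ' : (0:ℝ) ≤ σ := hσ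
      rcases lt_trichotomy σ σ₀ with h | h | h
      · refine (hleft σ ⟨hσ', h.le⟩).mono_of_mem_nhdsWithin ?_
        have : Set.Ici (0:ℝ) ∩ Set.Iic σ₀ ∈ 𝓝[Set.Ici (0:ℝ)] σ :=
          inter_mem self_mem_nhdsWithin (mem_nhdsWithin_of_mem_nhds (Iic_mem_nhds h))
        rwa [Set.Ici_inter_Iic] at this
      · refine ((hleft σ ⟨hσ', h.le⟩).union (hright σ h.ge)).mono ?_
        intro a ha
        rcases le_or_gt a σ₀ with h' | h'
        · exact Or.inl ⟨ha, h'⟩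
        · exact Or.inr h'.le
      · exact (hright σ h.le).mono_of_mem_nhdsWithin (mem_nhdsWithin_of_mem_nhds (Ici_mem_nhds h))
    have hy0 : y 0 = x τ := by simp [hy_def, hσ₀]
    have hyviab : ∀ σ ∈ Set.Ici (0:ℝ), y σ ∈ C := by
      intro σ hσ
      have hσ' : (0:ℝ) ≤ σ := hσ
      by_cases h : σ ≤ σ₀
      · rw [hA σ ⟨hσ', h⟩]
        refine interior_subset (hmem (τ + σ) ⟨by linarith [hτ.1], by
          linarith [hσ₀def.le, hσ₀def.ge]⟩)
      · rw [hB σ (le_of_not_ge h)]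
        exact hzviab _ (by simp only [mem_Ici] at *; linarith [le_of_not_ge h])
    refine ⟨⟨interior_subset hxτint, y, ⟨hy0, hysol⟩, hyviab⟩, fun hfrτ => ?_⟩
    rw [← closure_diff_interior] at hfrτ
    exact hfrτ.2 hxτint
end
end

section
/- Let f : ℝⁿ → ℝⁿ be continuous with linear growth. If (K_m) is a sequence of subsets of ℝⁿ each of which is viable under f, then the upper limit Limsup_{m→∞} K_m is viable under f. Consequently, for any sequence of subsets (C_m) of ℝⁿ, Limsup_{m→∞} Viab_f(C_m) ⊆ Viab_f(Limsup_{m→∞} C_m). -/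
open Filter Set Metric Topology
open scoped ENNReal NNReal

noncomputable section

/-- The (Painlevé–Kuratowski) upper limit of a sequence of subsets:
`Limsup A_m = {x : liminf_{m→∞} dist(x, A_m) = 0}`. -/
def limsupSets {E : Type*} [NormedAddCommGroup E] (A : ℕ → Set E) : Set E :=
  {x | Filter.liminf (fun m => EMetric.infEdist x (A m)) Filter.atTop = 0}

set_option linter.unusedSectionVars false

/-- Monotonicity of `limsupSets`. -/
lemma limsupSets_mono {E : Type*} [NormedAddCommGroup E] {A B : ℕ → Set E} (h : ∀ m, A m ⊆ B m) :
    limsupSets A ⊆ limsupSets B := by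
  intro x hx
  have hle : liminf (fun m => EMetric.infEdist x (B m)) atTop ≤
      liminf (fun m => EMetric.infEdist x (A m)) atTop :=
    Filter.liminf_le_liminf (Eventually.of_forall fun m => EMetric.infEdist_anti (h m))
  simpa [limsupSets, hx] using le_antisymm (by simpa [limsupSets] using hle.trans_eq hx) (zero_le)

/-- Time-shift of a solution. -/
lemma sols_shift {E : Type*} [NormedAddCommGroup E] [NormedSpace ℝ E] {f : E → E} {x₀ : E} {x : ℝ → E} (hx : x ∈ Sols f x₀) {t₀ : ℝ} (ht₀ : 0 ≤ t₀) :
    (fun s => x (s + t₀)) ∈ Sols f (x t₀) := by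
  obtain ⟨-, hsol⟩ := hx
  refine ⟨by simp, fun s hs => ?_⟩
  have h1 : HasDerivWithinAt x (f (x (s + t₀))) (Ici 0) (s + t₀) :=
    hsol (s + t₀) (by simp only [mem_Ici] at hs ⊢; linarith)
  have h2 : HasDerivWithinAt (fun u : ℝ => u + t₀) 1 (Ici 0) s :=
    ((hasDerivAt_id s).add_const t₀).hasDerivWithinAt
  have h3 : MapsTo (fun u : ℝ => u + t₀) (Ici 0) (Ici 0) := fun u hu => by
    simp only [mem_Ici] at hu ⊢; linarith
  have := HasDerivWithinAt.scomp s h1 h2 h3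
  simpa [Function.comp_def] using this

/-- Viability kernels are viable. -/
lemma viable_viabKer {E : Type*} [NormedAddCommGroup E] [NormedSpace ℝ E] (f : E → E) (C : Set E) : Viable f (ViabKer f C) := by
  rintro x₀ ⟨hx₀C, x, hxS, hxC⟩
  refine ⟨x, hxS, fun t ht => ⟨hxC t ht, fun s => x (s + t), sols_shift hxS ht, fun s hs => ?_⟩⟩
  exact hxC (s + t) (by simp only [mem_Ici] at hs ht ⊢; linarith)


lemma mem_limsupSets_of_forall {E : Type*} [NormedAddCommGroup E] {A : ℕ → Set E} {x : E}
    (h : ∀ ε : ℝ≥0∞, 0 < ε → ∃ᶠ m in atTop, EMetric.infEdist x (A m) < ε) :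
    x ∈ limsupSets A := by
  refine le_antisymm ?_ (zero_le)
  refine ENNReal.le_of_forall_pos_le_add fun ε hε _ => ?_
  rw [zero_add]
  exact liminf_le_of_frequently_le ((h ε (by exact_mod_cast hε)).mono fun m hm => hm.le)

/-- Monotonicity of the Grönwall bound in time. -/
lemma gronwallBound_mono' {δ K ε : ℝ} (hδ : 0 ≤ δ) (hK : 0 < K) (hε : 0 ≤ ε) :
    MonotoneOn (gronwallBound δ K ε) (Ici 0) := by
  intro s hs t ht hst
  rw [gronwallBound_of_K_ne_0 hK.ne']
  have h1 : Real.exp (K * s) ≤ Real.exp (K * t) :=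
    Real.exp_le_exp.2 (by nlinarith [hK.le])
  have h2 : (1:ℝ) ≤ Real.exp (K * s) := by
    rw [← Real.exp_zero]; exact Real.exp_le_exp.2 (by simp only [mem_Ici] at hs; nlinarith)
  have h3 : 0 ≤ ε / K := div_nonneg hε hK.le
  nlinarith

lemma gronwallBound_nonneg {δ K ε t : ℝ} (hδ : 0 ≤ δ) (hK : 0 < K) (hε : 0 ≤ ε) (ht : 0 ≤ t) :
    0 ≤ gronwallBound δ K ε t := by
  rw [gronwallBound_of_K_ne_0 hK.ne']
  have h2 : (1:ℝ) ≤ Real.exp (K * t) := by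
    rw [← Real.exp_zero]; exact Real.exp_le_exp.2 (by nlinarith)
  have h3 : 0 ≤ ε / K := div_nonneg hε hK.le
  nlinarith [Real.exp_pos (K * t)]

variable {E : Type*} [NormedAddCommGroup E] [NormedSpace ℝ E] [ProperSpace E]

lemma viable_limsup (f : E → E) (hf : Continuous f) (hgrowth : LinGrowth f)
    (Kseq : ℕ → Set E) (hK : ∀ m, Viable f (Kseq m)) : Viable f (limsupSets Kseq) := by
  obtain ⟨c, hc, hcf⟩ := hgrowth
  intro x₀ hx₀
  -- step 1: select approximating points
  have hsel : ∀ k : ℕ, ∃ m, k ≤ m ∧ ∃ p, p ∈ Kseq m ∧ edist x₀ p < ((k:ℝ≥0∞)+1)⁻¹ := by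
    intro k
    have h1 : (0:ℝ≥0∞) < ((k:ℝ≥0∞)+1)⁻¹ :=
      ENNReal.inv_pos.mpr (by simp [ENNReal.add_eq_top])
    have h2 : liminf (fun m => EMetric.infEdist x₀ (Kseq m)) atTop < ((k:ℝ≥0∞)+1)⁻¹ := by
      rw [hx₀]; exact h1
    obtain ⟨m, hm, hlt⟩ := (frequently_atTop.1 (frequently_lt_of_liminf_lt (h := h2))) k
    obtain ⟨p, hp, hpe⟩ := EMetric.infEdist_lt_iff.1 hlt
    exact ⟨m, hm, p, hp, hpe⟩
  choose φ hφk p hpK hpe using hsel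
  have hpe' : ∀ k : ℕ, edist x₀ (p k) ≤ ((k:ℝ≥0∞))⁻¹ :=
    fun k => (hpe k).le.trans (ENNReal.inv_le_inv' (by simp))
  have hptend : Tendsto p atTop (𝓝 x₀) := by
    rw [EMetric.tendsto_atTop]
    intro ε hε
    obtain ⟨N, hN⟩ := eventually_atTop.1 (ENNReal.tendsto_inv_nat_nhds_zero.eventually
      (gt_mem_nhds hε))
    exact ⟨N, fun n hn => by rw [edist_comm]; exact ((hpe' n).trans_lt (hN n hn))⟩
  have hpnorm : ∀ k, ‖p k‖ ≤ ‖x₀‖ + 1 := by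
    intro k
    have h1 : edist x₀ (p k) ≤ ENNReal.ofReal 1 := by
      rw [ENNReal.ofReal_one]
      exact (hpe k).le.trans (by exact ENNReal.inv_le_one.2 (by simp))
    have h2 : dist x₀ (p k) ≤ 1 := (edist_le_ofReal zero_le_one).1 h1
    have h3 : ‖p k‖ - ‖x₀‖ ≤ ‖p k - x₀‖ := norm_sub_norm_le _ _
    have h4 : ‖p k - x₀‖ = dist x₀ (p k) := by rw [dist_comm, dist_eq_norm]
    linarith
  -- step 2: solutions
  have hsol : ∀ k, ∃ y : ℝ → E, (y 0 = p k ∧ SolOn f y (Set.Ici 0)) ∧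
      ∀ t ∈ Set.Ici (0:ℝ), y t ∈ Kseq (φ k) := by
    intro k
    obtain ⟨y, ⟨hy0, hysol⟩, hyK⟩ := hK (φ k) (p k) (hpK k)
    exact ⟨y, ⟨hy0, hysol⟩, hyK⟩
  choose y hy0sol hyK using hsol
  have hy0 : ∀ k, y k 0 = p k := fun k => (hy0sol k).1
  have hysol : ∀ k, SolOn f (y k) (Set.Ici 0) := fun k => (hy0sol k).2
  set b : ℝ := ‖x₀‖ + 1 with hb
  have hb0 : 0 ≤ b := by positivity
  set R : ℝ → ℝ := fun T => gronwallBound b c c T with hR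
  have hycont : ∀ k, ContinuousOn (y k) (Set.Ici 0) := by
    intro k
    exact fun s hs => ((hysol k) s hs).continuousWithinAt
  -- a priori bound
  have hbound : ∀ k, ∀ t, 0 ≤ t → ‖y k t‖ ≤ R t := by
    intro k t ht
    have := norm_le_gronwallBound_of_norm_deriv_right_le (f := y k)
      (f' := fun s => f (y k s)) (δ := b) (K := c) (ε := c) (a := 0) (b := t)
      ((hycont k).mono Icc_subset_Ici_self)
      (fun s hs => ((hysol k) s (mem_Ici.2 hs.1)).mono (Ici_subset_Ici.2 hs.1))
      (by rw [hy0]; exact hpnorm k)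
      (fun s hs => by have := hcf (y k s); nlinarith)
      t (by constructor <;> linarith)
    simpa using this
  have hRmono : MonotoneOn R (Set.Ici 0) := gronwallBound_mono' hb0 hc hc.le
  have hRnonneg : ∀ t, 0 ≤ t → 0 ≤ R t := fun t ht => gronwallBound_nonneg hb0 hc hc.le ht
  -- equi-Lipschitz on [0,T]
  have hlip : ∀ k (T : ℝ), 0 ≤ T → ∀ s ∈ Icc (0:ℝ) T, ∀ t ∈ Icc (0:ℝ) T,
      ‖y k t - y k s‖ ≤ (c * (R T + 1)) * ‖t - s‖ := by
    intro k T hT s hs t ht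
    refine Convex.norm_image_sub_le_of_norm_hasDerivWithin_le (f := y k)
      (f' := fun u => f (y k u)) (s := Icc 0 T)
      (fun u hu => ((hysol k) u (mem_Ici.2 hu.1)).mono Icc_subset_Ici_self) ?_
      (convex_Icc 0 T) hs ht
    intro u hu
    have h1 := hcf (y k u)
    have h2 : ‖y k u‖ ≤ R T := (hbound k u hu.1).trans (hRmono (mem_Ici.2 hu.1) (mem_Ici.2 hT) hu.2)
    nlinarith
  -- step 3: compactness in the product over rationals
  set g : ℕ → (ℚ → E) := fun k q => y k (max (q:ℝ) 0) with hg
  have hgS : ∀ k, g k ∈ Set.univ.pi fun q : ℚ => closedBall (0:E) (R (max (q:ℝ) 0)) := by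
    intro k q _
    simp only [mem_closedBall_zero_iff]
    exact hbound k _ (le_max_right _ _)
  have hScpt : IsSeqCompact (Set.univ.pi fun q : ℚ => closedBall (0:E) (R (max (q:ℝ) 0))) :=
    (isCompact_univ_pi fun q => isCompact_closedBall _ _).isSeqCompact
  obtain ⟨G, -, ψ, hψmono, hψtend⟩ := hScpt hgS
  have hGq : ∀ q : ℚ, Tendsto (fun k => y (ψ k) (max (q:ℝ) 0)) atTop (𝓝 (G q)) := by
    intro q
    exact (tendsto_pi_nhds.1 hψtend) q
  -- step 4: convergence at every real time
  have hcauchy : ∀ t : ℝ, CauchySeq fun k => y (ψ k) (max t 0) := by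
    intro t
    set t' : ℝ := max t 0 with ht'
    have ht'0 : 0 ≤ t' := le_max_right _ _
    set T : ℝ := t' + 1 with hT
    have hT0 : 0 ≤ T := by linarith
    set L : ℝ := c * (R T + 1) with hL
    have hL0 : 0 ≤ L := by
      have := hRnonneg T hT0
      positivity
    rw [Metric.cauchySeq_iff]
    intro ε hε
    set δ : ℝ := min 1 (ε / (4 * (L + 1))) with hδ
    have hδ0 : 0 < δ := lt_min one_pos (by positivity)
    obtain ⟨q, hq1, hq2⟩ := exists_rat_btwn (show t' < t' + δ by linarith)
    have hq0 : (0:ℝ) ≤ (q:ℝ) := le_trans ht'0 hq1.le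
    have hqT : (q:ℝ) ≤ T := by
      have : δ ≤ 1 := min_le_left _ _
      rw [hT]; linarith
    have hmaxq : max ((q:ℝ)) 0 = (q:ℝ) := max_eq_left hq0
    have hcq : CauchySeq fun k => y (ψ k) (max ((q:ℝ)) 0) := (hGq q).cauchySeq
    rw [Metric.cauchySeq_iff] at hcq
    obtain ⟨N, hN⟩ := hcq (ε / 2) (by positivity)
    refine ⟨N, fun k hk j hj => ?_⟩
    have hd1 : ∀ i, dist (y (ψ i) t') (y (ψ i) (q:ℝ)) ≤ L * δ := by
      intro i
      have := hlip (ψ i) T hT0 ((q:ℝ)) ⟨hq0, hqT⟩ t' ⟨ht'0, by linarith⟩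
      rw [dist_eq_norm]
      calc ‖y (ψ i) t' - y (ψ i) (q:ℝ)‖ ≤ L * ‖t' - (q:ℝ)‖ := this
        _ ≤ L * δ := by
            refine mul_le_mul_of_nonneg_left ?_ hL0
            rw [Real.norm_eq_abs, abs_le]
            constructor <;> linarith
    have hd2 : dist (y (ψ k) (q:ℝ)) (y (ψ j) (q:ℝ)) < ε / 2 := by
      have := hN k hk j hj
      rwa [hmaxq] at this
    have hLδ : L * δ ≤ ε / 4 := by
      have h1 : δ ≤ ε / (4 * (L + 1)) := min_le_right _ _
      have h2 : L * δ ≤ L * (ε / (4 * (L + 1))) := mul_le_mul_of_nonneg_left h1 hL0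
      have hA : ε / (4 * (L + 1)) * (4 * (L + 1)) = ε := div_mul_cancel₀ _ (by positivity)
      have hAp : 0 ≤ ε / (4 * (L + 1)) := by positivity
      nlinarith
    calc dist (y (ψ k) (max t 0)) (y (ψ j) (max t 0))
        ≤ dist (y (ψ k) t') (y (ψ k) (q:ℝ)) + dist (y (ψ k) (q:ℝ)) (y (ψ j) (max t 0)) :=
          dist_triangle _ _ _
      _ ≤ L * δ + (dist (y (ψ k) (q:ℝ)) (y (ψ j) (q:ℝ)) + dist (y (ψ j) (q:ℝ)) (y (ψ j) t')) := by
          gcongr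
          · exact hd1 k
          · exact dist_triangle _ _ _
      _ ≤ L * δ + (dist (y (ψ k) (q:ℝ)) (y (ψ j) (q:ℝ)) + L * δ) := by
          gcongr
          rw [dist_comm]; exact hd1 j
      _ < ε := by have := hd2; linarith
  -- step 5: the limit function
  have hxex : ∀ t : ℝ, ∃ l, Tendsto (fun k => y (ψ k) (max t 0)) atTop (𝓝 l) :=
    fun t => cauchySeq_tendsto_of_complete (hcauchy t)
  choose x hxt using hxex
  have hxt' : ∀ t : ℝ, 0 ≤ t → Tendsto (fun k => y (ψ k) t) atTop (𝓝 (x t)) := by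
    intro t ht
    have := hxt t
    rwa [max_eq_left ht] at this
  have hx0 : x 0 = x₀ := by
    have h1 : Tendsto (fun k => y (ψ k) 0) atTop (𝓝 x₀) := by
      have : Tendsto (fun k => p (ψ k)) atTop (𝓝 x₀) :=
        hptend.comp hψmono.tendsto_atTop
      simpa [hy0] using this
    exact tendsto_nhds_unique (hxt' 0 le_rfl) h1
  -- Lipschitz-type estimate for the limit
  have hxlip : ∀ (T : ℝ), 0 ≤ T → ∀ s t : ℝ, |s| ≤ T → |t| ≤ T →
      dist (x t) (x s) ≤ (c * (R T + 1)) * |t - s| := by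
    intro T hT s t hs ht
    have hms : max s 0 ∈ Icc (0:ℝ) T := ⟨le_max_right _ _, max_le (le_of_abs_le hs) hT⟩
    have hmt : max t 0 ∈ Icc (0:ℝ) T := ⟨le_max_right _ _, max_le (le_of_abs_le ht) hT⟩
    have key : ∀ k, dist (y (ψ k) (max t 0)) (y (ψ k) (max s 0)) ≤ (c * (R T + 1)) * |t - s| := by
      intro k
      have h1 := hlip (ψ k) T hT (max s 0) hms (max t 0) hmt
      rw [dist_eq_norm]
      refine h1.trans ?_
      have hC : 0 ≤ c * (R T + 1) := by have := hRnonneg T hT; positivity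
      refine mul_le_mul_of_nonneg_left ?_ hC
      rw [Real.norm_eq_abs]
      exact abs_max_sub_max_le_abs _ _ _
    exact le_of_tendsto ((hxt t).dist (hxt s)) (Eventually.of_forall key)
  have hxcont : Continuous x := by
    rw [continuous_iff_continuousAt]
    intro t
    rw [Metric.continuousAt_iff]
    intro ε hε
    set T : ℝ := |t| + 1 with hTd
    have hT0 : 0 ≤ T := by positivity
    set L : ℝ := c * (R T + 1) with hLd
    have hL0 : 0 ≤ L := by have := hRnonneg T hT0; positivity
    refine ⟨min 1 (ε / (L + 1)), lt_min one_pos (by positivity), fun {s} hs => ?_⟩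
    have hsT : |s| ≤ T := by
      have h1 : |s - t| < 1 := lt_of_lt_of_le hs (min_le_left _ _)
      calc |s| = |t + (s - t)| := by ring_nf
        _ ≤ |t| + |s - t| := abs_add_le _ _
        _ ≤ T := by rw [hTd]; linarith
    have h2 := hxlip T hT0 t s (by rw [hTd]; linarith) hsT
    refine lt_of_le_of_lt h2 ?_
    have h3 : |s - t| < ε / (L + 1) := lt_of_lt_of_le hs (min_le_right _ _)
    have h4 : L * |s - t| ≤ L * (ε / (L + 1)) := mul_le_mul_of_nonneg_left h3.le hL0
    have hA : ε / (L + 1) * (L + 1) = ε := div_mul_cancel₀ _ (by positivity)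
    have hAp : 0 < ε / (L + 1) := by positivity
    nlinarith
  -- step 6: integral equation for the limit
  have hfx : Continuous fun s => f (x s) := hf.comp hxcont
  have hinteq : ∀ t : ℝ, 0 ≤ t → x t = x₀ + ∫ s in (0:ℝ)..t, f (x s) := by
    intro t ht
    have hyint : ∀ k, y (ψ k) t - y (ψ k) 0 = ∫ s in (0:ℝ)..t, f (y (ψ k) s) := by
      intro k
      have hcont : ContinuousOn (y (ψ k)) (Icc 0 t) := (hycont _).mono Icc_subset_Ici_self
      have hderiv : ∀ s ∈ Ioo (0:ℝ) t, HasDerivWithinAt (y (ψ k)) (f (y (ψ k) s)) (Ioi s) s :=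
        fun s hs => ((hysol (ψ k)) s (mem_Ici.2 hs.1.le)).mono
          (fun u hu => le_trans hs.1.le (le_of_lt hu))
      have hint : IntervalIntegrable (fun s => f (y (ψ k) s)) MeasureTheory.volume 0 t := by
        apply ContinuousOn.intervalIntegrable
        rw [uIcc_of_le ht]
        exact hf.comp_continuousOn hcont
      exact (intervalIntegral.integral_eq_sub_of_hasDeriv_right_of_le ht hcont hderiv hint).symm
    have hconv : Tendsto (fun k => ∫ s in (0:ℝ)..t, f (y (ψ k) s)) atTop
        (𝓝 (∫ s in (0:ℝ)..t, f (x s))) := by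
      simp only [intervalIntegral.integral_of_le ht]
      apply MeasureTheory.tendsto_integral_of_dominated_convergence
        (bound := fun _ => c * (R t + 1))
      · intro k
        refine ContinuousOn.aestronglyMeasurable ?_ measurableSet_Ioc
        exact hf.comp_continuousOn ((hycont _).mono fun u hu => hu.1.le)
      · rw [MeasureTheory.integrable_const_iff]
        exact Or.inr ⟨by rw [MeasureTheory.Measure.restrict_apply_univ]; exact measure_Ioc_lt_top⟩
      · intro k
        refine (MeasureTheory.ae_restrict_iff' measurableSet_Ioc).2 (Eventually.of_forall ?_)
        intro s hs
        have h1 := hcf (y (ψ k) s)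
        have h2 : ‖y (ψ k) s‖ ≤ R t :=
          (hbound _ s hs.1.le).trans (hRmono (mem_Ici.2 hs.1.le) (mem_Ici.2 (hs.1.le.trans hs.2)) hs.2)
        nlinarith
      · refine (MeasureTheory.ae_restrict_iff' measurableSet_Ioc).2 (Eventually.of_forall ?_)
        intro s hs
        exact (hf.tendsto (x s)).comp (hxt' s hs.1.le)
    have hlhs : Tendsto (fun k => y (ψ k) t - y (ψ k) 0) atTop (𝓝 (x t - x₀)) := by
      have := (hxt' t ht).sub (hxt' 0 le_rfl)
      rwa [hx0] at this
    have heq := tendsto_nhds_unique (by simpa only [hyint] using hlhs) hconv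
    exact (sub_eq_iff_eq_add'.1 heq)
  -- step 7: the limit is a solution
  have hFTC : ∀ t : ℝ, HasDerivAt (fun u => x₀ + ∫ s in (0:ℝ)..u, f (x s)) (f (x t)) t := by
    intro t
    have h1 : IntervalIntegrable (fun s => f (x s)) MeasureTheory.volume 0 t :=
      hfx.intervalIntegrable _ _
    exact (intervalIntegral.integral_hasDerivAt_right h1
      (hfx.stronglyMeasurableAtFilter _ _) hfx.continuousAt).const_add x₀
  refine ⟨x, ⟨hx0, fun t ht => ?_⟩, fun t ht => ?_⟩
  · exact ((hFTC t).hasDerivWithinAt).congr (fun s hs => hinteq s hs) (hinteq t ht)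
  · -- membership in the upper limit
    apply mem_limsupSets_of_forall
    intro ε hε
    rw [frequently_atTop]
    intro N
    obtain ⟨M, hM⟩ := (EMetric.tendsto_atTop.1 (hxt' t ht)) ε hε
    set K : ℕ := max N M with hKdef
    refine ⟨φ (ψ K), le_trans (le_max_left N M) (le_trans (hψmono.le_apply) (hφk _)), ?_⟩
    have hmem : y (ψ K) t ∈ Kseq (φ (ψ K)) := hyK (ψ K) t ht
    have h2 : edist (x t) (y (ψ K) t) < ε := by
      rw [edist_comm]; exact hM K (le_max_right N M)
    exact lt_of_le_of_lt (EMetric.infEdist_le_edist_of_mem hmem) h2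

/-- Let `f : ℝⁿ → ℝⁿ` be continuous with linear growth. The upper limit of a sequence of
subsets viable under `f` is viable under `f`; consequently
`Limsup Viab_f(C_m) ⊆ Viab_f(Limsup C_m)`. -/
theorem limsup_viable_and_kernels {n : ℕ}
    (f : EuclideanSpace ℝ (Fin n) → EuclideanSpace ℝ (Fin n))
    (hf : Continuous f) (hgrowth : LinGrowth f) :
    (∀ Kseq : ℕ → Set (EuclideanSpace ℝ (Fin n)),
      (∀ m, Viable f (Kseq m)) → Viable f (limsupSets Kseq)) ∧
    (∀ Cseq : ℕ → Set (EuclideanSpace ℝ (Fin n)),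
      limsupSets (fun m => ViabKer f (Cseq m)) ⊆ ViabKer f (limsupSets Cseq)) := by
  constructor
  · exact fun Kseq hK => viable_limsup f hf hgrowth Kseq hK
  · intro Cseq x₀ hx₀
    have h1 : Viable f (limsupSets fun m => ViabKer f (Cseq m)) :=
      viable_limsup f hf hgrowth _ (fun m => viable_viabKer f (Cseq m))
    obtain ⟨x, hxS, hxmem⟩ := h1 x₀ hx₀
    have hsub : limsupSets (fun m => ViabKer f (Cseq m)) ⊆ limsupSets Cseq :=
      limsupSets_mono (fun m => Set.sep_subset _ _)
    exact ⟨hsub hx₀, x, hxS, fun t ht => hsub (hxmem t ht)⟩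
end
end

section
/- Let u : ℝⁿ → ℝ ∪ {+∞} be a nontrivial extended function and let x ∈ Dom(u). Then the epigraph {(v, λ) ∈ ℝⁿ × ℝ : D↑u(x)(v) ≤ λ} of the contingent epiderivative of u at x equals the contingent cone T_{Ep(u)}(x, u(x)) to the epigraph of u at the point (x, u(x)). -/
open Filter Set Metric Topology
open scoped ENNReal NNReal

noncomputable section

/-- The epigraph of an extended function `u : E → ℝ ∪ {±∞}`:
`Ep(u) = {(x, λ) ∈ E × ℝ : u(x) ≤ λ}`. -/
def epiSet {E : Type*} (u : E → EReal) : Set (E × ℝ) :=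
  {p | u p.1 ≤ (p.2 : EReal)}

/-- The contingent epiderivative
`D↑u(x)(v) = liminf_{h→0+, v'→v} (u(x + h·v') − u(x))/h`, with values in `[−∞, +∞]`. -/
def epiDeriv {E : Type*} [NormedAddCommGroup E] [NormedSpace ℝ E]
    (u : E → EReal) (x : E) (v : E) : EReal :=
  Filter.liminf (fun q : ℝ × E => ((q.1⁻¹ : ℝ) : EReal) * (u (x + q.1 • q.2) - u x))
    ((nhdsWithin (0:ℝ) (Set.Ioi 0)) ×ˢ nhds v)

/-- Let `u : ℝⁿ → ℝ ∪ {+∞}` be a nontrivial extended function and `x ∈ Dom(u)`. Then the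
epigraph of the contingent epiderivative `D↑u(x)` equals the contingent cone to the
epigraph of `u` at `(x, u(x))`. -/
theorem epiDeriv_epigraph_eq_contCone {n : ℕ}
    (u : EuclideanSpace ℝ (Fin n) → EReal)
    (hbot : ∀ y, u y ≠ ⊥) (hnontriv : ∃ y, u y ≠ ⊤)
    (x : EuclideanSpace ℝ (Fin n)) (hx : u x ≠ ⊤) :
    {p : (EuclideanSpace ℝ (Fin n)) × ℝ | epiDeriv u x p.1 ≤ (p.2 : EReal)}
      = contCone (epiSet u) (x, (u x).toReal) := by
  set a : ℝ := (u x).toReal with ha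
  have hux : u x = (a : EReal) := (EReal.coe_toReal hx (hbot x)).symm
  have hmem : ((x, a) : (EuclideanSpace ℝ (Fin n)) × ℝ) ∈ epiSet u := by
    simp only [epiSet, Set.mem_setOf_eq, hux]; exact le_refl _
  ext ⟨v, lam⟩
  simp only [Set.mem_setOf_eq, contCone]
  constructor
  · intro H
    rw [← le_zero_iff]
    refine ENNReal.le_of_forall_pos_le_add fun ε hε _ => ?_
    rw [zero_add]
    set r : ℝ := (ε : ℝ) with hrdef
    have hr0 : (0:ℝ) < r := hε
    have H' : epiDeriv u x v ≤ ((lam : ℝ) : EReal) := H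
    rw [epiDeriv] at H'
    have Hlt : Filter.liminf
        (fun q : ℝ × (EuclideanSpace ℝ (Fin n)) =>
          ((q.1⁻¹ : ℝ) : EReal) * (u (x + q.1 • q.2) - u x))
        ((nhdsWithin (0:ℝ) (Set.Ioi 0)) ×ˢ nhds v) < ((lam + r : ℝ) : EReal) := by
      refine lt_of_le_of_lt H' ?_
      exact_mod_cast lt_add_of_pos_right lam hr0
    have hfreq := Filter.frequently_lt_of_liminf_lt (by isBoundedDefault) Hlt
    refine Filter.liminf_le_of_frequently_le ?_
    rw [Filter.frequently_iff]
    intro S hS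
    obtain ⟨δ', hδ'0, hδ'⟩ := mem_nhdsGT_iff_exists_Ioo_subset.1 hS
    set δ : ℝ := min r δ' with hδdef
    have hδ0 : (0:ℝ) < δ := lt_min hr0 hδ'0
    have hev : ∀ᶠ q : ℝ × (EuclideanSpace ℝ (Fin n)) in
        (nhdsWithin (0:ℝ) (Set.Ioi 0)) ×ˢ nhds v,
        q.1 ∈ Set.Ioo (0:ℝ) δ ∧ q.2 ∈ Metric.ball v δ := by
      refine Filter.Eventually.prod_mk ?_ ?_
      · exact Ioo_mem_nhdsGT_of_mem ⟨le_refl _, hδ0⟩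
      · exact Metric.ball_mem_nhds v hδ0
    obtain ⟨⟨h, v'⟩, hlt, hh, hv'⟩ := (hfreq.and_eventually hev).exists
    have hh0 : (0:ℝ) < h := hh.1
    have hzt : u (x + h • v') ≠ ⊤ := by
      intro ht
      rw [ht, hux, EReal.top_sub_coe, EReal.coe_mul_top_of_pos
        (inv_pos.2 hh0)] at hlt
      exact not_top_lt hlt
    set b2 : ℝ := (u (x + h • v')).toReal with hb2def
    have hb2 : u (x + h • v') = (b2 : EReal) :=
      (EReal.coe_toReal hzt (hbot _)).symm
    rw [hb2, hux, ← EReal.coe_sub, ← EReal.coe_mul, EReal.coe_lt_coe_iff] at hlt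
    have hkey : b2 - a < h * (lam + r) := by
      have h2 := (inv_mul_lt_iff₀ hh0).1 hlt
      linarith [h2]
    set μ : ℝ := max b2 (a + h * lam) with hμdef
    have hpt : ((x + h • v', μ) : (EuclideanSpace ℝ (Fin n)) × ℝ) ∈ epiSet u := by
      simp only [epiSet, Set.mem_setOf_eq, hb2]
      exact_mod_cast le_max_left b2 (a + h * lam)
    have hsmul : ((x, a) : (EuclideanSpace ℝ (Fin n)) × ℝ) + h • (v, lam)
        = (x + h • v, a + h * lam) := rfl
    have hdist : dist ((x + h • v, a + h * lam) :
        (EuclideanSpace ℝ (Fin n)) × ℝ) (x + h • v', μ) ≤ h * r := by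
      rw [Prod.dist_eq]
      refine max_le ?_ ?_
      · show dist (x + h • v) (x + h • v') ≤ h * r
        rw [dist_eq_norm]
        have he : (x + h • v) - (x + h • v') = h • (v - v') := by
          rw [smul_sub]; abel
        rw [he, norm_smul, Real.norm_of_nonneg hh0.le]
        have hvv : ‖v - v'‖ < δ := by
          rw [← dist_eq_norm, dist_comm]; exact hv'
        have hvr : ‖v - v'‖ ≤ r := le_trans hvv.le (min_le_left _ _)
        exact mul_le_mul_of_nonneg_left hvr hh0.le
      · show dist (a + h * lam) μ ≤ h * r
        have hμge : a + h * lam ≤ μ := le_max_right _ _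
        rw [Real.dist_eq, abs_sub_comm, abs_of_nonneg (sub_nonneg.2 hμge)]
        have h1 : b2 - (a + h * lam) ≤ h * r := by nlinarith [hkey]
        have h2 : (a + h * lam) - (a + h * lam) ≤ h * r := by
          nlinarith [hh0.le, hr0.le]
        rcases max_cases b2 (a + h * lam) with ⟨hm, _⟩ | ⟨hm, _⟩ <;>
          rw [hμdef, hm]
        · exact h1
        · exact h2
    refine ⟨h, hδ' ⟨hh.1, lt_of_lt_of_le hh.2 (min_le_right _ _)⟩, ?_⟩
    have hinf : Metric.infDist (((x, a) : (EuclideanSpace ℝ (Fin n)) × ℝ)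
        + h • (v, lam)) (epiSet u) ≤ h * r := by
      rw [hsmul]
      exact le_trans (Metric.infDist_le_dist_of_mem hpt) hdist
    have hdivr : Metric.infDist (((x, a) : (EuclideanSpace ℝ (Fin n)) × ℝ)
        + h • (v, lam)) (epiSet u) / h ≤ r := by
      rw [div_le_iff₀ hh0]; linarith [hinf]
    calc ENNReal.ofReal (Metric.infDist (((x, a) : (EuclideanSpace ℝ (Fin n)) × ℝ)
          + h • (v, lam)) (epiSet u) / h)
        ≤ ENNReal.ofReal r := ENNReal.ofReal_le_ofReal hdivr
      _ = (ε : ℝ≥0∞) := ENNReal.ofReal_coe_nnreal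
  · intro H
    refine le_of_forall_gt_imp_ge_of_dense fun c hc => ?_
    obtain ⟨d, hd1, hd2⟩ := exists_between hc
    have hdt : d ≠ ⊤ := fun ht => absurd (ht ▸ hd2) (by simp)
    have hdb : d ≠ ⊥ := fun hb => absurd (hb ▸ hd1) (by simp)
    set r : ℝ := d.toReal with hrdefr
    have hdr : d = (r : EReal) := (EReal.coe_toReal hdt hdb).symm
    have hlr : lam < r := by
      rw [hdr] at hd1; exact_mod_cast hd1
    set ε : ℝ := r - lam with hεdef
    have hε0 : (0:ℝ) < ε := by simp only [hεdef]; linarith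
    rw [epiDeriv]
    refine Filter.liminf_le_of_frequently_le ?_
    rw [Filter.frequently_iff]
    intro S hS
    obtain ⟨T, hT, V, hV, hTV⟩ := Filter.mem_prod_iff.1 hS
    obtain ⟨δ₁, hδ₁0, hδ₁⟩ := mem_nhdsGT_iff_exists_Ioo_subset.1 hT
    obtain ⟨δ₂, hδ₂0, hδ₂⟩ := Metric.mem_nhds_iff.1 hV
    set b : ℝ := min δ₂ ε with hbdef
    have hb0 : (0:ℝ) < b := lt_min hδ₂0 hε0
    have Hlt : Filter.liminf (fun h : ℝ => ENNReal.ofReal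
        (Metric.infDist (((x, a) : (EuclideanSpace ℝ (Fin n)) × ℝ)
          + h • (v, lam)) (epiSet u) / h)) (nhdsWithin (0:ℝ) (Set.Ioi 0))
        < ENNReal.ofReal b := by
      rw [H]; exact ENNReal.ofReal_pos.2 hb0
    have hfreq := Filter.frequently_lt_of_liminf_lt (by isBoundedDefault) Hlt
    have hev : ∀ᶠ h : ℝ in nhdsWithin (0:ℝ) (Set.Ioi 0), h ∈ Set.Ioo (0:ℝ) δ₁ :=
      Ioo_mem_nhdsGT_of_mem ⟨le_refl _, hδ₁0⟩
    obtain ⟨h, hlt, hh⟩ := (hfreq.and_eventually hev).exists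
    have hh0 : (0:ℝ) < h := hh.1
    have hlt2 : Metric.infDist (((x, a) : (EuclideanSpace ℝ (Fin n)) × ℝ)
        + h • (v, lam)) (epiSet u) / h < b := by
      rwa [ENNReal.ofReal_lt_ofReal_iff hb0] at hlt
    have hlt3 : Metric.infDist (((x, a) : (EuclideanSpace ℝ (Fin n)) × ℝ)
        + h • (v, lam)) (epiSet u) < h * b := by
      rw [div_lt_iff₀ hh0] at hlt2; linarith
    obtain ⟨⟨y, μ⟩, hyμ, hdist⟩ := (Metric.infDist_lt_iff ⟨_, hmem⟩).1 hlt3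
    have hsmul : ((x, a) : (EuclideanSpace ℝ (Fin n)) × ℝ) + h • (v, lam)
        = (x + h • v, a + h * lam) := rfl
    rw [hsmul, Prod.dist_eq, max_lt_iff] at hdist
    obtain ⟨hd1', hd2'⟩ := hdist
    dsimp only at hd1' hd2'
    set v' : EuclideanSpace ℝ (Fin n) := h⁻¹ • (y - x) with hv'def
    have hy : x + h • v' = y := by
      rw [hv'def, smul_smul, mul_inv_cancel₀ (ne_of_gt hh0), one_smul]
      abel
    have hvv' : dist v' v < δ₂ := by
      have he : v' - v = h⁻¹ • (y - (x + h • v)) := by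
        rw [hv'def]
        have hne : h ≠ 0 := ne_of_gt hh0
        match_scalars <;> field_simp
      rw [dist_eq_norm, he, norm_smul, norm_inv, Real.norm_of_nonneg hh0.le,
        ← dist_eq_norm, dist_comm]
      calc h⁻¹ * dist (x + h • v) y < h⁻¹ * (h * b) :=
            mul_lt_mul_of_pos_left hd1' (inv_pos.2 hh0)
        _ = b := by field_simp
        _ ≤ δ₂ := min_le_left _ _
    have hμlt : μ < a + h * lam + h * b := by
      have habs : |a + h * lam - μ| < h * b := by rwa [Real.dist_eq] at hd2'
      have := abs_lt.1 habs
      linarith [this.1]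
    have huy : u y ≤ (μ : EReal) := hyμ
    have hyt : u y ≠ ⊤ := fun ht => by
      rw [ht] at huy; exact absurd huy (by simp)
    set d2 : ℝ := (u y).toReal with hd2def
    have hyd : u y = (d2 : EReal) := (EReal.coe_toReal hyt (hbot _)).symm
    have hd2μ : d2 ≤ μ := by rw [hyd] at huy; exact_mod_cast huy
    refine ⟨(h, v'), hTV (Set.mk_mem_prod (hδ₁ hh) (hδ₂ hvv')), ?_⟩
    show ((h⁻¹ : ℝ) : EReal) * (u (x + h • v') - u x) ≤ c
    refine le_trans ?_ hd2.le
    rw [hdr, hy, hyd, hux, ← EReal.coe_sub, ← EReal.coe_mul, EReal.coe_le_coe_iff]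
    have hbε : b ≤ ε := min_le_right _ _
    have hfin : h⁻¹ * (d2 - a) ≤ lam + b := by
      rw [inv_mul_le_iff₀ hh0]
      nlinarith [hd2μ, hμlt, hh0.le]
    linarith [hfin, hbε]
end
end
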